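/- Let t > 0, ℓ > 0 and a > 0 be reals. Define p(t, d) = (√2·e^{−t/4}/(4πt)^{3/2}) · ∫_d^∞ r·e^{−r²/(4t)}·(cosh r − cosh d)^{−1/2} dr for d > 0. Then ∫_{x ∈ ℝ} ∫_{y = 1}^{e^{a}} p(t, dist(x + iy, e^ℓ x + i e^ℓ y)) · y^{−2} dy dx = (e^{−t/4}/√(4πt)) · a · e^{−ℓ²/(4t)} / (2·sinh(ℓ/2)), where dist denotes the hyperbolic distance on the upper half-plane ℍ = {x + iy : y > 0} with metric (dx² + dy²)/y². -/

import Mathlib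

open Real MeasureTheory

/-- The heat kernel of the hyperbolic plane at time `t` between two points at hyperbolic
distance `d` (for Brownian motion run at speed 2). -/
noncomputable def heatKernelH (t d : ℝ) : ℝ :=
  Real.sqrt 2 * Real.exp (-t / 4) / (4 * π * t) ^ ((3 : ℝ) / 2) *
    ∫ r in Set.Ioi d, r * Real.exp (-r ^ 2 / (4 * t)) / Real.sqrt (Real.cosh r - Real.cosh d)

/- ### Auxiliary lemmas -/

lemma arcsine_zero {u : ℝ} (hu : u ∉ Set.Ioo (-1:ℝ) 1) : 1 / Real.sqrt (1 - u^2) = 0 := by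
  have h : 1 - u^2 ≤ 0 := by
    rcases not_and_or.1 hu with h | h
    · push_neg at h; nlinarith
    · push_neg at h; nlinarith
  rw [Real.sqrt_eq_zero'.2 h, div_zero]

lemma arcsine_integrableOn :
    IntegrableOn (fun u : ℝ => 1 / Real.sqrt (1 - u^2)) (Set.Ioo (-1) 1) := by
  have h := intervalIntegral.integrableOn_deriv_of_nonneg (a := -1) (b := 1)
    (g := Real.arcsin) (g' := fun u => 1 / Real.sqrt (1 - u^2))
    Real.continuous_arcsin.continuousOn
    (fun x hx => Real.hasDerivAt_arcsin hx.1.ne' hx.2.ne)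
    (fun x _ => by positivity)
  exact (integrableOn_Ioc_iff_integrableOn_Ioo (by simp)).1 h

lemma arcsine_integrable : Integrable (fun u : ℝ => 1 / Real.sqrt (1 - u^2)) := by
  rw [← MeasureTheory.integrableOn_iff_integrable_of_support_subset
    (s := Set.Ioo (-1:ℝ) 1) ?_]
  · exact arcsine_integrableOn
  · intro u hu
    by_contra h
    exact hu (arcsine_zero h)

lemma arcsine_integral : (∫ u : ℝ, 1 / Real.sqrt (1 - u^2)) = π := by
  rw [← MeasureTheory.setIntegral_eq_integral_of_forall_compl_eq_zero
    (s := Set.Ioo (-1:ℝ) 1) (fun u hu => arcsine_zero hu)]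
  rw [← MeasureTheory.integral_Ioc_eq_integral_Ioo,
    ← intervalIntegral.integral_of_le (by norm_num : (-1:ℝ) ≤ 1)]
  rw [intervalIntegral.integral_eq_sub_of_hasDeriv_right_of_le (by norm_num)
    Real.continuous_arcsin.continuousOn
    (fun x hx => (Real.hasDerivAt_arcsin hx.1.ne' hx.2.ne).hasDerivWithinAt)
    ((intervalIntegrable_iff_integrableOn_Ioo_of_le (by norm_num)).2 arcsine_integrableOn)]
  rw [Real.arcsin_one, Real.arcsin_neg_one]
  ring

lemma scaled_arcsine_integrable {A B : ℝ} (hA : 0 < A) (hB : 0 < B) :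
    Integrable (fun u : ℝ => 1 / Real.sqrt (A - B * u^2)) := by
  have hR : Real.sqrt (A/B) ≠ 0 := (Real.sqrt_pos.2 (div_pos hA hB)).ne'
  have hkey : ∀ u : ℝ, 1 / Real.sqrt (A - B * u^2)
      = (Real.sqrt A)⁻¹ * (1 / Real.sqrt (1 - (u / Real.sqrt (A/B))^2)) := by
    intro u
    have h1 : A - B * u^2 = A * (1 - (u / Real.sqrt (A/B))^2) := by
      rw [div_pow, Real.sq_sqrt (div_pos hA hB).le]
      field_simp
    rw [h1, Real.sqrt_mul hA.le, one_div, one_div, mul_inv]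
  simp only [hkey]
  exact (arcsine_integrable.comp_div hR).const_mul _

lemma scaled_arcsine_integral {A B : ℝ} (hA : 0 < A) (hB : 0 < B) :
    (∫ u : ℝ, 1 / Real.sqrt (A - B * u^2)) = π / Real.sqrt B := by
  have hRpos : 0 < Real.sqrt (A/B) := Real.sqrt_pos.2 (div_pos hA hB)
  have hkey : ∀ u : ℝ, 1 / Real.sqrt (A - B * u^2)
      = (Real.sqrt A)⁻¹ * (1 / Real.sqrt (1 - (u / Real.sqrt (A/B))^2)) := by
    intro u
    have h1 : A - B * u^2 = A * (1 - (u / Real.sqrt (A/B))^2) := by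
      rw [div_pow, Real.sq_sqrt (div_pos hA hB).le]
      field_simp
    rw [h1, Real.sqrt_mul hA.le, one_div, one_div, mul_inv]
  simp only [hkey]
  rw [MeasureTheory.integral_const_mul,
    MeasureTheory.Measure.integral_comp_div (fun u : ℝ => 1 / Real.sqrt (1 - u^2)),
    arcsine_integral]
  rw [abs_of_pos hRpos, Real.sqrt_div hA.le, smul_eq_mul]
  have hsA : Real.sqrt A ≠ 0 := (Real.sqrt_pos.2 hA).ne'
  have hsB : Real.sqrt B ≠ 0 := (Real.sqrt_pos.2 hB).ne'
  field_simp

lemma gauss_integrable {t : ℝ} (ht : 0 < t) :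
    Integrable (fun r : ℝ => r * Real.exp (-r^2/(4*t))) := by
  have h := integrable_mul_exp_neg_mul_sq (b := 1/(4*t)) (by positivity)
  refine h.congr (Filter.Eventually.of_forall fun x => ?_)
  show x * Real.exp (-(1/(4*t)) * x^2) = x * Real.exp (-x^2/(4*t))
  rw [show -(1/(4*t)) * x^2 = -x^2/(4*t) by ring]

lemma gauss_integral {t : ℝ} (ht : 0 < t) (b : ℝ) :
    (∫ r in Set.Ioi b, r * Real.exp (-r^2/(4*t))) = 2*t*Real.exp (-b^2/(4*t)) := by
  have hderiv : ∀ x ∈ Set.Ici b,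
      HasDerivAt (fun r : ℝ => -(2*t) * Real.exp (-r^2/(4*t)))
        (x * Real.exp (-x^2/(4*t))) x := by
    intro x _
    have h1 : HasDerivAt (fun r : ℝ => -r^2/(4*t)) (-x/(2*t)) x := by
      have h := ((hasDerivAt_pow 2 x).neg.div_const (4*t))
      refine h.congr_deriv ?_
      field_simp
      ring
    have h3 := (h1.exp).const_mul (-(2*t))
    refine h3.congr_deriv ?_
    field_simp
  have htend : Filter.Tendsto (fun r : ℝ => -(2*t) * Real.exp (-r^2/(4*t)))
      Filter.atTop (nhds 0) := by
    have h1 : Filter.Tendsto (fun r : ℝ => -r^2/(4*t)) Filter.atTop Filter.atBot := by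
      have h2 : Filter.Tendsto (fun r : ℝ => r^2/(4*t)) Filter.atTop Filter.atTop :=
        (Filter.tendsto_pow_atTop two_ne_zero).atTop_div_const (by positivity)
      have h3 := Filter.tendsto_neg_atTop_atBot.comp h2
      simpa [Function.comp_def, neg_div] using h3
    have h4 := Real.tendsto_exp_atBot.comp h1
    have h5 := h4.const_mul (-(2*t))
    simpa using h5
  have h := MeasureTheory.integral_Ioi_of_hasDerivAt_of_tendsto' hderiv
    ((gauss_integrable ht).integrableOn) htend
  rw [h]
  ring

/-- The two-variable integrand. -/
noncomputable def Hfun (t c B : ℝ) : ℝ × ℝ → ℝ := fun p =>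
  p.2 * Real.exp (-p.2 ^ 2 / (4 * t)) / Real.sqrt (Real.cosh p.2 - (c + B * p.1 ^ 2))

lemma Hfun_apply (t c B u r : ℝ) : Hfun t c B (u, r) =
    r * Real.exp (-r ^ 2 / (4 * t)) / Real.sqrt (Real.cosh r - (c + B * u ^ 2)) := rfl

lemma Hfun_meas (t c B : ℝ) : Measurable (Hfun t c B) := by
  apply Measurable.div
  · fun_prop
  · fun_prop

/-- The one-variable kernel as a function of `u = x / y`. -/
noncomputable def Kaux (t c B : ℝ) (u : ℝ) : ℝ :=
  ∫ r in Set.Ioi (0:ℝ), Hfun t c B (u, r)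

lemma Kaux_meas (t c B : ℝ) : Measurable (Kaux t c B) :=
  ((Hfun_meas t c B).stronglyMeasurable.integral_prod_right').measurable

lemma Kaux_nonneg (t c B u : ℝ) : 0 ≤ Kaux t c B u := by
  apply MeasureTheory.setIntegral_nonneg measurableSet_Ioi
  intro r hr
  rw [Hfun_apply]
  have : 0 ≤ r := (le_of_lt hr)
  positivity

lemma Hfun_slice_integrable {t ℓ B : ℝ} (ht : 0 < t) (hB : 0 < B) (r : ℝ) :
    Integrable (fun u => Hfun t (Real.cosh ℓ) B (u, r)) := by
  by_cases hcr : Real.cosh ℓ < Real.cosh r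
  · have h := (scaled_arcsine_integrable (A := Real.cosh r - Real.cosh ℓ)
      (by linarith) hB).const_mul (r * Real.exp (-r^2/(4*t)))
    refine h.congr (Filter.Eventually.of_forall fun u => ?_)
    simp only [Hfun_apply, mul_one_div, sub_sub]
  · have h0 : (fun u => Hfun t (Real.cosh ℓ) B (u, r)) = fun _ => 0 := by
      funext u
      have hle : Real.cosh r - (Real.cosh ℓ + B * u^2) ≤ 0 := by
        push_neg at hcr
        nlinarith [sq_nonneg u]
      rw [Hfun_apply, Real.sqrt_eq_zero'.2 hle, div_zero]
    rw [h0]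
    exact integrable_zero _ _ _

lemma Hfun_slice_integral {t ℓ B : ℝ} (ht : 0 < t) (hℓ : 0 < ℓ) (hB : 0 < B)
    {r : ℝ} (hr : 0 < r) :
    (∫ u : ℝ, Hfun t (Real.cosh ℓ) B (u, r)) =
      Set.indicator (Set.Ioi ℓ) (fun r => (r * Real.exp (-r^2/(4*t))) * (π / Real.sqrt B)) r := by
  by_cases hrℓ : ℓ < r
  · have hcr : Real.cosh ℓ < Real.cosh r := by
      rw [Real.cosh_lt_cosh, abs_of_pos hℓ, abs_of_pos hr]
      exact hrℓ
    rw [Set.indicator_of_mem (Set.mem_Ioi.2 hrℓ)]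
    have hkey : ∀ u : ℝ, Hfun t (Real.cosh ℓ) B (u, r) =
        (r * Real.exp (-r^2/(4*t))) * (1 / Real.sqrt ((Real.cosh r - Real.cosh ℓ) - B * u^2)) := by
      intro u
      rw [Hfun_apply, mul_one_div, sub_sub]
    simp only [hkey]
    rw [MeasureTheory.integral_const_mul, scaled_arcsine_integral (by linarith) hB]
  · rw [Set.indicator_of_notMem (by simpa [Set.mem_Ioi] using hrℓ)]
    push_neg at hrℓ
    have hcr : Real.cosh r ≤ Real.cosh ℓ := by
      rw [Real.cosh_le_cosh, abs_of_pos hr, abs_of_pos hℓ]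
      exact hrℓ
    have h0 : (fun u : ℝ => Hfun t (Real.cosh ℓ) B (u, r)) = fun _ => 0 := by
      funext u
      have hle : Real.cosh r - (Real.cosh ℓ + B * u^2) ≤ 0 := by nlinarith [sq_nonneg u]
      rw [Hfun_apply, Real.sqrt_eq_zero'.2 hle, div_zero]
    rw [h0]
    simp

lemma Hfun_nonneg {t c B : ℝ} {u r : ℝ} (hr : 0 ≤ r) : 0 ≤ Hfun t c B (u, r) := by
  rw [Hfun_apply]
  positivity

lemma Hfun_prod_integrable {t ℓ B : ℝ} (ht : 0 < t) (hℓ : 0 < ℓ) (hB : 0 < B) :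
    Integrable (Hfun t (Real.cosh ℓ) B)
      ((volume : Measure ℝ).prod (volume.restrict (Set.Ioi 0))) := by
  rw [MeasureTheory.integrable_prod_iff' (Hfun_meas _ _ _).aestronglyMeasurable]
  constructor
  · exact Filter.Eventually.of_forall fun r => Hfun_slice_integrable ht hB r
  · have hind : Integrable
        (Set.indicator (Set.Ioi ℓ) (fun r => (r * Real.exp (-r^2/(4*t))) * (π / Real.sqrt B)))
        (volume.restrict (Set.Ioi (0:ℝ))) := by
      apply Integrable.restrict
      exact (((gauss_integrable ht).mul_const _).integrableOn).integrable_indicator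
        measurableSet_Ioi
    refine hind.congr ?_
    rw [Filter.EventuallyEq, MeasureTheory.ae_restrict_iff' measurableSet_Ioi]
    refine Filter.Eventually.of_forall fun r hr => ?_
    have h1 : ∀ u : ℝ, ‖Hfun t (Real.cosh ℓ) B (u, r)‖ = Hfun t (Real.cosh ℓ) B (u, r) :=
      fun u => Real.norm_of_nonneg (Hfun_nonneg (le_of_lt hr))
    rw [← Hfun_slice_integral ht hℓ hB hr]
    simp only [h1]

lemma Kaux_integrable {t ℓ B : ℝ} (ht : 0 < t) (hℓ : 0 < ℓ) (hB : 0 < B) :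
    Integrable (Kaux t (Real.cosh ℓ) B) :=
  (Hfun_prod_integrable ht hℓ hB).integral_prod_left

lemma Kaux_integral {t ℓ B : ℝ} (ht : 0 < t) (hℓ : 0 < ℓ) (hB : 0 < B) :
    (∫ u : ℝ, Kaux t (Real.cosh ℓ) B u) =
      π / Real.sqrt B * (2*t*Real.exp (-ℓ^2/(4*t))) := by
  have hswap := MeasureTheory.integral_integral_swap
    (f := fun u r => Hfun t (Real.cosh ℓ) B (u, r))
    (μ := (volume : Measure ℝ)) (ν := volume.restrict (Set.Ioi 0))
    (Hfun_prod_integrable ht hℓ hB)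
  calc (∫ u : ℝ, Kaux t (Real.cosh ℓ) B u)
      = ∫ r in Set.Ioi (0:ℝ), ∫ u : ℝ, Hfun t (Real.cosh ℓ) B (u, r) := hswap
    _ = ∫ r in Set.Ioi (0:ℝ),
          Set.indicator (Set.Ioi ℓ) (fun r => (r * Real.exp (-r^2/(4*t))) * (π / Real.sqrt B)) r := by
        apply MeasureTheory.setIntegral_congr_fun measurableSet_Ioi
        intro r hr
        exact Hfun_slice_integral ht hℓ hB hr
    _ = ∫ r in Set.Ioi (0:ℝ) ∩ Set.Ioi ℓ, (r * Real.exp (-r^2/(4*t))) * (π / Real.sqrt B) := by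
        rw [MeasureTheory.setIntegral_indicator measurableSet_Ioi]
    _ = ∫ r in Set.Ioi ℓ, (r * Real.exp (-r^2/(4*t))) * (π / Real.sqrt B) := by
        rw [Set.Ioi_inter_Ioi, sup_eq_right.2 hℓ.le]
    _ = (∫ r in Set.Ioi ℓ, r * Real.exp (-r^2/(4*t))) * (π / Real.sqrt B) := by
        rw [MeasureTheory.integral_mul_const]
    _ = π / Real.sqrt B * (2*t*Real.exp (-ℓ^2/(4*t))) := by
        rw [gauss_integral ht]
        ring

lemma extendIoi {t d₀ : ℝ} (hd₀ : 0 ≤ d₀) :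
    (∫ r in Set.Ioi d₀, r * Real.exp (-r ^ 2 / (4 * t)) / Real.sqrt (Real.cosh r - Real.cosh d₀))
    = ∫ r in Set.Ioi (0:ℝ),
        r * Real.exp (-r ^ 2 / (4 * t)) / Real.sqrt (Real.cosh r - Real.cosh d₀) := by
  symm
  calc (∫ r in Set.Ioi (0:ℝ),
          r * Real.exp (-r ^ 2 / (4 * t)) / Real.sqrt (Real.cosh r - Real.cosh d₀))
      = ∫ r in Set.Ioi (0:ℝ), Set.indicator (Set.Ioi d₀)
          (fun r => r * Real.exp (-r ^ 2 / (4 * t)) / Real.sqrt (Real.cosh r - Real.cosh d₀)) r := by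
        apply MeasureTheory.setIntegral_congr_fun measurableSet_Ioi
        intro r hr
        by_cases hrd : d₀ < r
        · rw [Set.indicator_of_mem (Set.mem_Ioi.2 hrd)]
        · rw [Set.indicator_of_notMem (by simpa [Set.mem_Ioi] using hrd)]
          push_neg at hrd
          have hcr : Real.cosh r ≤ Real.cosh d₀ := by
            rw [Real.cosh_le_cosh, abs_of_pos hr, abs_of_nonneg hd₀]
            exact hrd
          show r * Real.exp (-r ^ 2 / (4 * t)) / Real.sqrt (Real.cosh r - Real.cosh d₀) = 0
          rw [Real.sqrt_eq_zero'.2 (by linarith : Real.cosh r - Real.cosh d₀ ≤ 0), div_zero]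
    _ = ∫ r in Set.Ioi (0:ℝ) ∩ Set.Ioi d₀,
          r * Real.exp (-r ^ 2 / (4 * t)) / Real.sqrt (Real.cosh r - Real.cosh d₀) := by
        rw [MeasureTheory.setIntegral_indicator measurableSet_Ioi]
    _ = ∫ r in Set.Ioi d₀,
          r * Real.exp (-r ^ 2 / (4 * t)) / Real.sqrt (Real.cosh r - Real.cosh d₀) := by
        rw [Set.Ioi_inter_Ioi, sup_eq_right.2 hd₀]


lemma cosh_dist_special {ℓ x y : ℝ} (hℓ : 0 < ℓ) (hy : 0 < y)
    (h1 : 0 < ((x:ℂ) + (y:ℂ) * Complex.I).im)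
    (h2 : 0 < (((Real.exp ℓ * x : ℝ):ℂ) + ((Real.exp ℓ * y : ℝ):ℂ) * Complex.I).im) :
    Real.cosh (dist (UpperHalfPlane.mk _ h1) (UpperHalfPlane.mk _ h2))
      = Real.cosh ℓ + (2 * Real.sinh (ℓ/2)^2) * (x/y)^2 := by
  rw [UpperHalfPlane.cosh_dist, UpperHalfPlane.coe_mk, UpperHalfPlane.coe_mk,
    UpperHalfPlane.mk_im, UpperHalfPlane.mk_im]
  have him1 : ((x:ℂ) + (y:ℂ)*Complex.I).im = y := by simp
  have him2 : (((Real.exp ℓ * x:ℝ):ℂ) + ((Real.exp ℓ * y:ℝ):ℂ)*Complex.I).im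
      = Real.exp ℓ * y := by simp [Complex.exp_ofReal_re]
  rw [him1, him2]
  have hdist : dist ((x:ℂ) + (y:ℂ)*Complex.I)
      (((Real.exp ℓ * x:ℝ):ℂ) + ((Real.exp ℓ * y:ℝ):ℂ)*Complex.I) ^ 2
      = (x - Real.exp ℓ * x)^2 + (y - Real.exp ℓ * y)^2 := by
    rw [Complex.dist_eq, Complex.sq_norm]
    simp [Complex.normSq_apply, Complex.exp_ofReal_re]
    ring
  rw [hdist]
  have hE : Real.exp (ℓ/2) * Real.exp (ℓ/2) = Real.exp ℓ := by
    rw [← Real.exp_add]; norm_num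
  have id2 : (1 - Real.exp ℓ)^2 = 4 * Real.sinh (ℓ/2)^2 * Real.exp ℓ := by
    rw [Real.sinh_eq, Real.exp_neg, ← hE]
    have h := (Real.exp_pos (ℓ/2)).ne'
    field_simp
    ring
  have id1 : Real.cosh ℓ = 1 + 2 * Real.sinh (ℓ/2)^2 := by
    rw [show ℓ = 2*(ℓ/2) by ring, Real.cosh_two_mul, Real.cosh_sq]
    ring
  have key : (x - Real.exp ℓ*x)^2 + (y - Real.exp ℓ*y)^2
      = 4 * Real.sinh (ℓ/2)^2 * Real.exp ℓ * (x^2+y^2) := by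
    linear_combination (x^2+y^2) * id2
  rw [key, id1]
  have hE0 : (0:ℝ) < Real.exp ℓ := Real.exp_pos ℓ
  field_simp
  ring

theorem stmt6 (t ℓ a : ℝ) (ht : 0 < t) (hℓ : 0 < ℓ) (ha : 0 < a)
    (d : ℂ → ℂ → ℝ) (hd : ∀ z w : UpperHalfPlane, d (z : ℂ) (w : ℂ) = dist z w) :
    (∫ x : ℝ, ∫ y in Set.Ioo (1 : ℝ) (Real.exp a),
        heatKernelH t
          (d ((x : ℂ) + (y : ℂ) * Complex.I)
            ((Real.exp ℓ * x : ℝ) + ((Real.exp ℓ * y : ℝ) : ℂ) * Complex.I)) / y ^ 2) =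
      Real.exp (-t / 4) / Real.sqrt (4 * π * t) * a * Real.exp (-ℓ ^ 2 / (4 * t)) /
        (2 * Real.sinh (ℓ / 2)) := by
  have hs0 : 0 < Real.sinh (ℓ/2) := Real.sinh_pos_iff.2 (by linarith)
  set B : ℝ := 2 * Real.sinh (ℓ/2)^2 with hBdef
  have hB : 0 < B := by rw [hBdef]; positivity
  set C : ℝ := Real.sqrt 2 * Real.exp (-t/4) / (4*π*t)^((3:ℝ)/2) with hCdef
  have hC0 : 0 ≤ C := by rw [hCdef]; positivity
  set J : ℝ := π / Real.sqrt B * (2*t*Real.exp (-ℓ^2/(4*t))) with hJdef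
  have hKint : Integrable (Kaux t (Real.cosh ℓ) B) := Kaux_integrable ht hℓ hB
  have hKval : (∫ u:ℝ, Kaux t (Real.cosh ℓ) B u) = J :=
    (Kaux_integral ht hℓ hB).trans hJdef.symm
  have hpoint : ∀ (x : ℝ), ∀ y ∈ Set.Ioo (1:ℝ) (Real.exp a),
      heatKernelH t
          (d ((x : ℂ) + (y : ℂ) * Complex.I)
            ((Real.exp ℓ * x : ℝ) + ((Real.exp ℓ * y : ℝ) : ℂ) * Complex.I)) / y ^ 2
      = C * Kaux t (Real.cosh ℓ) B (x/y) / y^2 := by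
    intro x y hy
    have hy0 : 0 < y := lt_trans one_pos hy.1
    have him1 : 0 < ((x:ℂ) + (y:ℂ) * Complex.I).im := by simpa using hy0
    have him2 : 0 < (((Real.exp ℓ * x : ℝ):ℂ) + ((Real.exp ℓ * y : ℝ):ℂ) * Complex.I).im := by
      simpa [Complex.exp_ofReal_re] using mul_pos (Real.exp_pos ℓ) hy0
    have hdd : d ((x : ℂ) + (y : ℂ) * Complex.I)
        ((Real.exp ℓ * x : ℝ) + ((Real.exp ℓ * y : ℝ) : ℂ) * Complex.I)
        = dist (UpperHalfPlane.mk _ him1) (UpperHalfPlane.mk _ him2) :=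
      hd (UpperHalfPlane.mk _ him1) (UpperHalfPlane.mk _ him2)
    rw [hdd]
    have hcosh : Real.cosh (dist (UpperHalfPlane.mk _ him1) (UpperHalfPlane.mk _ him2))
        = Real.cosh ℓ + B * (x/y)^2 := by
      rw [hBdef]; exact cosh_dist_special hℓ hy0 him1 him2
    rw [heatKernelH, extendIoi dist_nonneg, hcosh, ← hCdef]
    simp only [Kaux, Hfun_apply]
  have hxint : ∀ y : ℝ, 0 < y →
      (∫ x : ℝ, C * Kaux t (Real.cosh ℓ) B (x/y) / y^2) = C * J / y := by
    intro y hy0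
    have h1 : ∀ x : ℝ, C * Kaux t (Real.cosh ℓ) B (x/y) / y^2
        = (C/y^2) * Kaux t (Real.cosh ℓ) B (x/y) := fun x => by ring
    simp only [h1]
    rw [MeasureTheory.integral_const_mul,
      MeasureTheory.Measure.integral_comp_div (Kaux t (Real.cosh ℓ) B) y, hKval,
      smul_eq_mul, abs_of_pos hy0]
    field_simp
  have hMmeas : Measurable (fun p : ℝ × ℝ => C * Kaux t (Real.cosh ℓ) B (p.1/p.2) / p.2^2) := by
    apply Measurable.div
    · exact ((Kaux_meas t (Real.cosh ℓ) B).comp (measurable_fst.div measurable_snd)).const_mul C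
    · fun_prop
  have hMint : Integrable (fun p : ℝ × ℝ => C * Kaux t (Real.cosh ℓ) B (p.1/p.2) / p.2^2)
      ((volume : Measure ℝ).prod (volume.restrict (Set.Ioo 1 (Real.exp a)))) := by
    rw [MeasureTheory.integrable_prod_iff' hMmeas.aestronglyMeasurable]
    constructor
    · rw [MeasureTheory.ae_restrict_iff' measurableSet_Ioo]
      refine Filter.Eventually.of_forall fun y hy => ?_
      have hy0 : 0 < y := lt_trans one_pos hy.1
      show Integrable (fun x : ℝ => C * Kaux t (Real.cosh ℓ) B (x/y) / y^2) volume
      exact ((hKint.comp_div hy0.ne').const_mul C).div_const _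
    · have hgood : Integrable (fun y : ℝ => C * J / y)
          (volume.restrict (Set.Ioo 1 (Real.exp a))) := by
        have hc : ContinuousOn (fun y : ℝ => C * J / y) (Set.Icc 1 (Real.exp a)) := by
          apply ContinuousOn.div continuousOn_const continuousOn_id
          intro y hy
          exact (lt_of_lt_of_le one_pos hy.1).ne'
        exact (hc.integrableOn_Icc).mono_set Set.Ioo_subset_Icc_self
      refine hgood.congr ?_
      rw [Filter.EventuallyEq, MeasureTheory.ae_restrict_iff' measurableSet_Ioo]
      refine Filter.Eventually.of_forall fun y hy => ?_
      have hy0 : 0 < y := lt_trans one_pos hy.1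
      have hnorm : ∀ x : ℝ, ‖C * Kaux t (Real.cosh ℓ) B (x/y) / y^2‖
          = C * Kaux t (Real.cosh ℓ) B (x/y) / y^2 := fun x => by
        have hk := Kaux_nonneg t (Real.cosh ℓ) B (x/y)
        exact Real.norm_of_nonneg (by positivity)
      show C * J / y = ∫ x : ℝ, ‖C * Kaux t (Real.cosh ℓ) B (x/y) / y^2‖
      rw [← hxint y hy0]
      simp only [hnorm]
  have h1e : (1:ℝ) ≤ Real.exp a := by nlinarith [Real.add_one_le_exp a]
  calc (∫ x : ℝ, ∫ y in Set.Ioo (1 : ℝ) (Real.exp a),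
        heatKernelH t
          (d ((x : ℂ) + (y : ℂ) * Complex.I)
            ((Real.exp ℓ * x : ℝ) + ((Real.exp ℓ * y : ℝ) : ℂ) * Complex.I)) / y ^ 2)
      = ∫ x : ℝ, ∫ y in Set.Ioo (1 : ℝ) (Real.exp a),
          C * Kaux t (Real.cosh ℓ) B (x/y) / y^2 := by
        refine MeasureTheory.integral_congr_ae (Filter.Eventually.of_forall fun x => ?_)
        exact MeasureTheory.setIntegral_congr_fun measurableSet_Ioo (fun y hy => hpoint x y hy)
    _ = ∫ y in Set.Ioo (1 : ℝ) (Real.exp a), ∫ x : ℝ,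
          C * Kaux t (Real.cosh ℓ) B (x/y) / y^2 :=
        MeasureTheory.integral_integral_swap
          (f := fun x y => C * Kaux t (Real.cosh ℓ) B (x/y) / y^2) hMint
    _ = ∫ y in Set.Ioo (1 : ℝ) (Real.exp a), C * J / y :=
        MeasureTheory.setIntegral_congr_fun measurableSet_Ioo
          (fun y hy => hxint y (lt_trans one_pos hy.1))
    _ = (C * J) * ∫ y in Set.Ioo (1 : ℝ) (Real.exp a), y⁻¹ := by
        simp only [div_eq_mul_inv]
        rw [MeasureTheory.integral_const_mul]
    _ = (C * J) * a := by
        rw [← MeasureTheory.integral_Ioc_eq_integral_Ioo,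
          ← intervalIntegral.integral_of_le h1e,
          integral_inv_of_pos one_pos (Real.exp_pos a)]
        simp [Real.log_exp]
    _ = Real.exp (-t / 4) / Real.sqrt (4 * π * t) * a * Real.exp (-ℓ ^ 2 / (4 * t)) /
        (2 * Real.sinh (ℓ / 2)) := by
        have h4πt : (0:ℝ) < 4*π*t := by positivity
        have hsqB : Real.sqrt B = Real.sqrt 2 * Real.sinh (ℓ/2) := by
          rw [hBdef, Real.sqrt_mul (by norm_num : (0:ℝ) ≤ 2), Real.sqrt_sq hs0.le]
        have hpow : (4*π*t)^((3:ℝ)/2) = (4*π*t) * Real.sqrt (4*π*t) := by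
          rw [show (3:ℝ)/2 = 1 + 1/2 by norm_num, Real.rpow_add h4πt, Real.rpow_one,
            ← Real.sqrt_eq_rpow]
        rw [hJdef, hCdef, hsqB, hpow]
        have hs2 : Real.sqrt 2 ≠ 0 := by positivity
        have hs4 : Real.sqrt (4*π*t) ≠ 0 := by positivity
        have hsinh : Real.sinh (ℓ/2) ≠ 0 := hs0.ne'
        have hπ : (π:ℝ) ≠ 0 := Real.pi_ne_zero
        field_simp
        ring
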